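/- Let F be a field of characteristic zero and let Δ = δ_0 ∘ {P_1(D),...,P_n(D)} be interpolation conditions given by polynomials P_1,...,P_n ∈ F[x_1,...,x_d]. If T = {X^{β_1},...,X^{β_n}} is a monomial interpolating basis for Δ, then T ⊆ Λ{P_1,...,P_n}; that is, every monomial in T occurs with nonzero coefficient in at least one of the polynomials P_1,...,P_n. -/
import Mathlib


open MvPolynomial

/-- The iterated partial derivative operator `D^α = ∂^{α_1}_{x_1} ⋯ ∂^{α_d}_{x_d}`. -/
noncomputable def Dmon (F : Type*) [CommSemiring F] {d : ℕ} (α : Fin d →₀ ℕ) :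
    Module.End F (MvPolynomial (Fin d) F) :=
  ((List.finRange d).map fun i =>
    ((pderiv i : Derivation F (MvPolynomial (Fin d) F) (MvPolynomial (Fin d) F)) :
      MvPolynomial (Fin d) F →ₗ[F] MvPolynomial (Fin d) F) ^ (α i)).prod

/-- The differential operator `P(D) = Σ_α P̂(α) D^α` induced by a polynomial `P`. -/
noncomputable def PD {F : Type*} [Field F] {d : ℕ} (P : MvPolynomial (Fin d) F) :
    Module.End F (MvPolynomial (Fin d) F) :=
  ∑ α ∈ P.support, P.coeff α • Dmon F α

/-- The linear functional `δ₀ ∘ P(D) : g ↦ (P(D) g)(0)`. -/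
noncomputable def delta0PD {F : Type*} [Field F] {d : ℕ} (P : MvPolynomial (Fin d) F) :
    MvPolynomial (Fin d) F →ₗ[F] F :=
  (MvPolynomial.aeval (0 : Fin d → F)).toLinearMap ∘ₗ PD P



lemma descFactorial_succ' (n k : ℕ) :
    n.descFactorial (k + 1) = n * (n - 1).descFactorial k := by
  cases n with
  | zero => simp [Nat.zero_descFactorial_succ]
  | succ m => simpa using Nat.succ_descFactorial_succ m k

lemma pderiv_pow_monomial {F : Type*} [CommRing F] {d : ℕ} (i : Fin d) (k : ℕ)
    (b : Fin d →₀ ℕ) (c : F) :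
    (((pderiv i : Derivation F (MvPolynomial (Fin d) F) (MvPolynomial (Fin d) F)) :
      MvPolynomial (Fin d) F →ₗ[F] MvPolynomial (Fin d) F) ^ k) (monomial b c)
      = monomial (b - Finsupp.single i k) (((b i).descFactorial k : F) * c) := by
  induction k generalizing b c with
  | zero => simp
  | succ k ih =>
    rw [pow_succ, Module.End.mul_apply]
    simp only [Derivation.coeFn_coe]
    rw [pderiv_monomial, ih]
    have h1 : (b - Finsupp.single i 1 : Fin d →₀ ℕ) i = b i - 1 := by simp [Finsupp.tsub_apply]
    rw [h1]
    congr 1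
    · rw [tsub_tsub, ← Finsupp.single_add, add_comm]
    · rw [descFactorial_succ' (b i) k]
      push_cast
      ring

lemma sum_single_apply_notmem {d : ℕ} (α : Fin d →₀ ℕ) :
    ∀ (l : List (Fin d)) (i : Fin d), i ∉ l →
      ((l.map fun j => Finsupp.single j (α j)).sum : Fin d →₀ ℕ) i = 0 := by
  intro l
  induction l with
  | nil => simp
  | cons j l ihl =>
    intro i hi
    simp only [List.mem_cons, not_or] at hi
    simp [List.sum_cons, Finsupp.add_apply, Finsupp.single_apply, Ne.symm hi.1, ihl i hi.2]

lemma prod_pderiv_pow_monomial {F : Type*} [CommRing F] {d : ℕ} (α : Fin d →₀ ℕ)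
    (l : List (Fin d)) (hl : l.Nodup) (b : Fin d →₀ ℕ) (c : F) :
    ((l.map fun i =>
      ((pderiv i : Derivation F (MvPolynomial (Fin d) F) (MvPolynomial (Fin d) F)) :
        MvPolynomial (Fin d) F →ₗ[F] MvPolynomial (Fin d) F) ^ (α i)).prod) (monomial b c)
      = monomial (b - (l.map fun i => Finsupp.single i (α i)).sum)
          ((l.map fun i => ((b i).descFactorial (α i) : F)).prod * c) := by
  induction l generalizing b c with
  | nil => simp
  | cons i l ih =>
    have hi : i ∉ l := (List.nodup_cons.mp hl).1
    have hln : l.Nodup := (List.nodup_cons.mp hl).2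
    simp only [List.map_cons, List.prod_cons, List.sum_cons, Module.End.mul_apply]
    rw [ih hln, pderiv_pow_monomial]
    have hS := sum_single_apply_notmem α l i hi
    have h1 : (b - (l.map fun i => Finsupp.single i (α i)).sum : Fin d →₀ ℕ) i = b i := by
      simp [Finsupp.tsub_apply, hS]
    rw [h1]
    congr 1
    · rw [tsub_tsub, add_comm]
    · ring


lemma Dmon_monomial {F : Type*} [CommRing F] {d : ℕ} (α b : Fin d →₀ ℕ) (c : F) :
    Dmon F α (monomial b c)
      = monomial (b - α)
          (((List.finRange d).map fun i => ((b i).descFactorial (α i) : F)).prod * c) := by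
  unfold Dmon
  rw [prod_pderiv_pow_monomial α _ (List.nodup_finRange d)]
  congr 2
  rw [← Fin.sum_univ_def fun i => Finsupp.single i (α i), Finsupp.univ_sum_single]

lemma aeval_zero_Dmon {F : Type*} [Field F] {d : ℕ} {α b : Fin d →₀ ℕ} (hab : α ≠ b) :
    MvPolynomial.aeval (0 : Fin d → F) (Dmon F α (monomial b (1 : F))) = 0 := by
  rw [Dmon_monomial, aeval_zero, constantCoeff_monomial]
  by_cases hba : b - α = 0
  · rw [if_pos hba]
    have hle : b ≤ α := tsub_eq_zero_iff_le.mp hba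
    have : ∃ i, b i < α i := by
      by_contra hcon
      push_neg at hcon
      exact hab (le_antisymm (fun i => hcon i) hle)
    obtain ⟨i, hi⟩ := this
    have hz : ((b i).descFactorial (α i) : F) = 0 := by
      rw [Nat.descFactorial_eq_zero_iff_lt.mpr hi]; simp
    rw [List.prod_eq_zero (List.mem_map.mpr ⟨i, List.mem_finRange i, hz⟩), zero_mul, map_zero]
  · rw [if_neg hba, map_zero]

/-- `prec` is a monomial ordering: a linear well-ordering of the monomials (identified with
their exponent vectors) that is compatible with multiplication of monomials. -/
structure IsMonomialOrder {d : ℕ} (prec : (Fin d →₀ ℕ) → (Fin d →₀ ℕ) → Prop) : Prop where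
  irrefl : ∀ a, ¬ prec a a
  trans : ∀ a b c, prec a b → prec b c → prec a c
  total : ∀ a b, a ≠ b → prec a b ∨ prec b a
  wf : WellFounded prec
  add_compat : ∀ a b c, prec a b → prec (a + c) (b + c)

/-- `m` is the `prec`-least monomial occurring in `P` with nonzero coefficient,
i.e. `X^m = lm(P)`. -/
def IsLeastMon {F : Type*} [Field F] {d : ℕ} (prec : (Fin d →₀ ℕ) → (Fin d →₀ ℕ) → Prop)
    (P : MvPolynomial (Fin d) F) (m : Fin d →₀ ℕ) : Prop :=
  m ∈ P.support ∧ ∀ m' ∈ P.support, m' ≠ m → prec m m'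

/-- `{P_1, ..., P_n}` is a "reverse" reduced basis w.r.t. `prec`: the `P_i` are linearly
independent and `lm(P_i) ∉ Λ{P_j}` for all `i < j`. -/
def IsRevReducedBasis {F : Type*} [Field F] {d n : ℕ}
    (prec : (Fin d →₀ ℕ) → (Fin d →₀ ℕ) → Prop) (P : Fin n → MvPolynomial (Fin d) F) : Prop :=
  LinearIndependent F P ∧
    ∀ i j : Fin n, i < j → ∀ m, IsLeastMon prec (P i) m → m ∉ (P j).support

/-- `T = {X^{β_1}, ..., X^{β_n}}` (indexed by the injective family `β`) is a monomial
interpolating basis for the interpolation conditions `lam_1, ..., lam_n`: for every vector of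
values `f` there is a unique `g` in the span of `T` with `lam i g = f i` for all `i`. -/
def IsMonIntBasisFam {F : Type*} [Field F] {d n : ℕ}
    (lam : Fin n → (MvPolynomial (Fin d) F →ₗ[F] F)) (β : Fin n → (Fin d →₀ ℕ)) : Prop :=
  ∀ f : Fin n → F, ∃! g : MvPolynomial (Fin d) F,
    g ∈ Submodule.span F (Set.range fun j => (monomial (β j) (1 : F) : MvPolynomial (Fin d) F))
      ∧ ∀ i, lam i g = f i

/-- If `T = {X^{β_1}, ..., X^{β_n}}` is a monomial interpolating basis for
`Δ = δ₀ ∘ {P_1(D), ..., P_n(D)}`, then every monomial of `T` occurs with nonzero coefficient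
in at least one of the `P_i`, i.e. `T ⊆ Λ{P_1, ..., P_n}`. -/
theorem monIntBasis_subset_interpMonomials {F : Type*} [Field F] [CharZero F] {d n : ℕ}
    (P : Fin n → MvPolynomial (Fin d) F)
    (β : Fin n → (Fin d →₀ ℕ)) (hβ : Function.Injective β)
    (hT : IsMonIntBasisFam (fun i => delta0PD (P i)) β) :
    ∀ j : Fin n, ∃ i : Fin n, β j ∈ (P i).support := by
  intro j
  by_contra hcon
  push_neg at hcon
  have hzero : ∀ i : Fin n, delta0PD (P i) (monomial (β j) (1 : F)) = 0 := by
    intro i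
    have hns : β j ∉ (P i).support := by
      simpa using hcon i
    unfold delta0PD PD
    simp only [LinearMap.comp_apply, LinearMap.sum_apply, LinearMap.smul_apply, map_sum, map_smul]
    refine Finset.sum_eq_zero fun α hα => ?_
    have hne : α ≠ β j := fun h => hns (h ▸ hα)
    rw [AlgHom.toLinearMap_apply, aeval_zero_Dmon hne, smul_zero]
  obtain ⟨g, -, huniq⟩ := hT 0
  have h0 : (0 : MvPolynomial (Fin d) F) = g :=
    huniq 0 ⟨Submodule.zero_mem _, fun i => by simp⟩
  have hm : (monomial (β j) (1 : F) : MvPolynomial (Fin d) F) = g :=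
    huniq _ ⟨Submodule.subset_span ⟨j, rfl⟩, fun i => by simpa using hzero i⟩
  exact one_ne_zero ((monomial_eq_zero).mp (hm.trans h0.symm))
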